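/- (Expander Mixing Lemma, inequality part.) Let G be a connected r-regular finite simple graph on n ≥ 2 vertices, and let λ be a second-maximum-modulus eigenvalue of G: λ is an eigenvalue of the adjacency matrix M, λ ≠ r, and |μ| ≤ |λ| for every eigenvalue μ of M with μ ≠ r. Then for all subsets A, B ⊆ V: |e(A,B) − r|A||B|/n| ≤ |λ|·√(|A|·|B|·(1 − |A|/n)·(1 − |B|/n)). -/

import Mathlib

open Finset
open scoped Classical

lemma eig_r_const' {V : Type*} [Fintype V] (G : SimpleGraph V) [DecidableRel G.Adj]
    (r : ℕ) (hconn : G.Connected) (hreg : G.IsRegularOfDegree r)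
    (g : V → ℝ) (hg : (G.adjMatrix ℝ).mulVec g = (r : ℝ) • g) :
    ∀ v w : V, g v = g w := by
  haveI : Nonempty V := hconn.nonempty
  obtain ⟨v₀, hv₀⟩ := Finite.exists_max g
  have key : ∀ v, g v = g v₀ → ∀ u, G.Adj v u → g u = g v₀ := by
    intro v hv u hu
    have h1 : ∑ w ∈ G.neighborFinset v, g w = (r : ℝ) * g v₀ := by
      have h := congrFun hg v
      rw [SimpleGraph.adjMatrix_mulVec_apply] at h
      rw [h, Pi.smul_apply, smul_eq_mul, hv]
    have h2 : ∑ w ∈ G.neighborFinset v, g v₀ = (r : ℝ) * g v₀ := by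
      have hc : #(G.neighborFinset v) = r := hreg v
      rw [Finset.sum_const, hc, nsmul_eq_mul]
    have := (Finset.sum_eq_sum_iff_of_le (fun w _ => hv₀ w)).1 (h1.trans h2.symm)
    exact this u (by rwa [SimpleGraph.mem_neighborFinset])
  suffices h : ∀ x, g x = g v₀ by intro v w; rw [h v, h w]
  intro x
  obtain ⟨p⟩ := hconn v₀ x
  have step : ∀ {y z : V} (p : G.Walk y z), g y = g v₀ → g z = g v₀ := by
    intro y z p
    induction p with
    | nil => exact id
    | cons h p ih => intro hy; exact ih (key _ hy _ h)
  exact step p rfl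

lemma spectral_bound' {V : Type*} [Fintype V] [DecidableEq V] [Nonempty V]
    (M : Matrix V V ℝ) (hM : M.IsHermitian) (r lam : ℝ)
    (hconst : ∀ g : V → ℝ, M.mulVec g = r • g → ∀ v w : V, g v = g w)
    (hmax : ∀ μ : ℝ, (∃ g : V → ℝ, g ≠ 0 ∧ M.mulVec g = μ • g) → μ ≠ r → |μ| ≤ |lam|)
    (a b : V → ℝ) (ha : ∑ v, a v = 0) (hb : ∑ v, b v = 0) :
    |∑ v, a v * M.mulVec b v| ≤
      |lam| * (Real.sqrt (∑ v, a v ^ 2) * Real.sqrt (∑ v, b v ^ 2)) := by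
  clear ha
  set u := hM.eigenvectorBasis with hu
  set μ := hM.eigenvalues with hμ
  set p : V → ℝ := fun i => ∑ v, u i v * a v with hp
  set q : V → ℝ := fun i => ∑ v, u i v * b v with hq
  have hbrep : ∀ v, b v = ∑ i, q i * u i v := by
    intro v
    have h := u.sum_repr' (WithLp.toLp 2 b)
    have h2 := congrFun (congrArg (fun x : EuclideanSpace ℝ V => (x : V → ℝ)) h) v
    simp only [PiLp.inner_apply, RCLike.inner_apply, starRingEnd_apply, star_trivial] at h2 ⊢
    rw [← h2, WithLp.ofLp_sum, Finset.sum_apply]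
    simp [smul_eq_mul]
    refine Finset.sum_congr rfl fun i _ => ?_
    congr 1
    exact Finset.sum_congr rfl fun x _ => mul_comm _ _
  have heigen : ∀ i, M.mulVec (u i) = μ i • ⇑(u i) := fun i => hM.mulVec_eigenvectorBasis i
  have hMb : ∀ v, M.mulVec b v = ∑ i, q i * (μ i * u i v) := by
    intro v
    rw [Matrix.mulVec, dotProduct]
    calc ∑ w, M v w * b w = ∑ w, M v w * ∑ i, q i * u i w := by
          exact Finset.sum_congr rfl fun w _ => by rw [← hbrep w]
      _ = ∑ w, ∑ i, q i * (M v w * u i w) := by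
          exact Finset.sum_congr rfl fun w _ => by
            rw [Finset.mul_sum]; exact Finset.sum_congr rfl fun i _ => by ring
      _ = ∑ i, q i * ∑ w, M v w * u i w := by
          rw [Finset.sum_comm]; exact Finset.sum_congr rfl fun i _ => by rw [Finset.mul_sum]
      _ = ∑ i, q i * (μ i * u i v) := by
          refine Finset.sum_congr rfl fun i _ => ?_
          congr 1
          have := congrFun (heigen i) v
          rw [Matrix.mulVec, dotProduct] at this
          rw [this]
          rfl
  have hstepA : ∑ v, a v * M.mulVec b v = ∑ i, μ i * (p i * q i) := by
    calc ∑ v, a v * M.mulVec b v = ∑ v, ∑ i, a v * (q i * (μ i * u i v)) := by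
          refine Finset.sum_congr rfl fun v _ => ?_
          rw [hMb v, Finset.mul_sum]
      _ = ∑ i, ∑ v, a v * (q i * (μ i * u i v)) := Finset.sum_comm
      _ = ∑ i, μ i * (p i * q i) := by
          refine Finset.sum_congr rfl fun i _ => ?_
          have : ∑ v, a v * (q i * (μ i * u i v)) = (μ i * q i) * ∑ v, u i v * a v := by
            rw [Finset.mul_sum]; exact Finset.sum_congr rfl fun v _ => by ring
          rw [this, hp]; ring
  have hterm : ∀ i, |μ i * (p i * q i)| ≤ |lam| * (|p i| * |q i|) := by
    intro i
    by_cases h : μ i = r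
    · have hcon : ∀ v w : V, u i v = u i w := by
        apply hconst
        rw [heigen i, h]
      have hq0 : q i = 0 := by
        obtain ⟨v₀⟩ := ‹Nonempty V›
        calc q i = ∑ v, u i v₀ * b v :=
              Finset.sum_congr rfl fun v _ => by rw [hcon v v₀]
          _ = u i v₀ * ∑ v, b v := (Finset.mul_sum _ _ _).symm
          _ = 0 := by rw [hb, mul_zero]
      simp [hq0, mul_nonneg, abs_nonneg]
    · have hnz : (⇑(u i) : V → ℝ) ≠ 0 := by
        intro h0
        exact u.orthonormal.ne_zero i (by simpa using congrArg (WithLp.toLp 2) h0)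
      have hle := hmax (μ i) ⟨u i, hnz, heigen i⟩ h
      calc |μ i * (p i * q i)| = |μ i| * (|p i| * |q i|) := by
            rw [abs_mul, abs_mul]
        _ ≤ |lam| * (|p i| * |q i|) :=
            mul_le_mul_of_nonneg_right hle (by positivity)
  have hpar : ∀ c : V → ℝ, ∑ i, (∑ v, u i v * c v) ^ 2 = ∑ v, c v ^ 2 := by
    intro c
    have h := u.sum_inner_mul_inner (WithLp.toLp 2 c) (WithLp.toLp 2 c)
    simp only [PiLp.inner_apply, RCLike.inner_apply, starRingEnd_apply, star_trivial] at h
    calc ∑ i, (∑ v, u i v * c v) ^ 2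
        = ∑ i, (∑ v, c v * u i v) * (∑ v, u i v * c v) := by
          refine Finset.sum_congr rfl fun i _ => ?_
          rw [sq]; congr 1; exact Finset.sum_congr rfl fun v _ => mul_comm _ _
      _ = ∑ v, c v * c v := by rw [← h]; exact Finset.sum_congr rfl fun i _ => mul_comm _ _
      _ = ∑ v, c v ^ 2 := by simp [sq]
  calc |∑ v, a v * M.mulVec b v| = |∑ i, μ i * (p i * q i)| := by rw [hstepA]
    _ ≤ ∑ i, |μ i * (p i * q i)| := Finset.abs_sum_le_sum_abs _ _
    _ ≤ ∑ i, |lam| * (|p i| * |q i|) := Finset.sum_le_sum fun i _ => hterm i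
    _ = |lam| * ∑ i, |p i| * |q i| := by rw [Finset.mul_sum]
    _ ≤ |lam| * (Real.sqrt (∑ i, p i ^ 2) * Real.sqrt (∑ i, q i ^ 2)) := by
        apply mul_le_mul_of_nonneg_left _ (abs_nonneg lam)
        rw [← Real.sqrt_mul (by positivity)]
        rw [show (∑ i, p i ^ 2) * ∑ i, q i ^ 2 = (∑ i, |p i| ^ 2) * ∑ i, |q i| ^ 2 by
          simp [sq_abs]]
        exact Real.le_sqrt_of_sq_le (Finset.sum_mul_sq_le_sq_mul_sq _ _ _)
    _ = |lam| * (Real.sqrt (∑ v, a v ^ 2) * Real.sqrt (∑ v, b v ^ 2)) := by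
        rw [hp, hq]
        rw [hpar a, hpar b]

/-- Expander Mixing Lemma, inequality part. -/
theorem expander_mixing_lemma_inequality
    {V : Type*} [Fintype V] (G : SimpleGraph V) [DecidableRel G.Adj]
    (r : ℕ) (hconn : G.Connected) (hreg : G.IsRegularOfDegree r)
    (hn : 2 ≤ Fintype.card V)
    (lam : ℝ)
    (heig : ∃ g : V → ℝ, g ≠ 0 ∧ (G.adjMatrix ℝ).mulVec g = lam • g)
    (hne : lam ≠ (r : ℝ))
    (hmax : ∀ μ : ℝ,
      (∃ g : V → ℝ, g ≠ 0 ∧ (G.adjMatrix ℝ).mulVec g = μ • g) →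
      μ ≠ (r : ℝ) → |μ| ≤ |lam|)
    (A B : Finset V) :
    |(∑ x ∈ A, ((B.filter fun y => G.Adj x y).card : ℝ))
        - (r : ℝ) * A.card * B.card / Fintype.card V| ≤
      |lam| * Real.sqrt ((A.card : ℝ) * B.card
        * (1 - (A.card : ℝ) / Fintype.card V)
        * (1 - (B.card : ℝ) / Fintype.card V)) := by
  haveI : Nonempty V := hconn.nonempty
  set n : ℝ := (Fintype.card V : ℝ) with hnn
  have hn0 : (0 : ℝ) < n := by
    rw [hnn]; exact_mod_cast lt_of_lt_of_le (by norm_num) hn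
  set α : ℝ := (A.card : ℝ) / n with hα
  set β : ℝ := (B.card : ℝ) / n with hβ
  set a : V → ℝ := fun v => (if v ∈ A then 1 else 0) - α with haa
  set b : V → ℝ := fun v => (if v ∈ B then 1 else 0) - β with hbb
  have hsum_ind : ∀ (S : Finset V), ∑ v, (if v ∈ S then (1 : ℝ) else 0) = S.card := by
    intro S
    rw [Finset.sum_ite_mem, Finset.univ_inter, Finset.sum_const, nsmul_eq_mul, mul_one]
  have hmulα : n * α = A.card := by rw [hα]; field_simp
  have hmulβ : n * β = B.card := by rw [hβ]; field_simp
  have ha : ∑ v, a v = 0 := by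
    rw [haa]
    rw [Finset.sum_sub_distrib, hsum_ind, Finset.sum_const, Finset.card_univ, nsmul_eq_mul,
      ← hnn, hmulα, sub_self]
  have hb : ∑ v, b v = 0 := by
    rw [hbb]
    rw [Finset.sum_sub_distrib, hsum_ind, Finset.sum_const, Finset.card_univ, nsmul_eq_mul,
      ← hnn, hmulβ, sub_self]
  set eB : V → ℝ := fun v => ((B.filter fun y => G.Adj v y).card : ℝ) with heBB
  have heB : ∀ v, eB v = ∑ y ∈ B, if G.Adj v y then (1 : ℝ) else 0 := by
    intro v; rw [heBB]; exact (Finset.sum_boole _ _).symm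
  have hMb : ∀ v, (G.adjMatrix ℝ).mulVec b v = eB v - r * β := by
    intro v
    rw [SimpleGraph.adjMatrix_mulVec_apply]
    rw [hbb]
    rw [Finset.sum_sub_distrib, Finset.sum_const]
    have hc : #(G.neighborFinset v) = r := hreg v
    rw [hc, nsmul_eq_mul]
    congr 1
    rw [Finset.sum_ite_mem, Finset.sum_const, nsmul_eq_mul, mul_one, heBB]
    congr 2
    ext y
    simp [SimpleGraph.mem_neighborFinset, and_comm]
  have hsum_eB : ∑ v, eB v = r * B.card := by
    calc ∑ v, eB v = ∑ v, ∑ y ∈ B, (if G.Adj v y then (1 : ℝ) else 0) :=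
          Finset.sum_congr rfl fun v _ => heB v
      _ = ∑ y ∈ B, ∑ v, (if G.Adj v y then (1 : ℝ) else 0) := Finset.sum_comm
      _ = ∑ y ∈ B, (r : ℝ) := by
          refine Finset.sum_congr rfl fun y _ => ?_
          rw [Finset.sum_boole]
          have : Finset.univ.filter (fun v => G.Adj v y) = G.neighborFinset y := by
            ext v
            simp [SimpleGraph.mem_neighborFinset, SimpleGraph.adj_comm]
          rw [this]
          have hc : #(G.neighborFinset y) = r := hreg y
          exact_mod_cast congrArg Nat.cast hc
      _ = r * B.card := by rw [Finset.sum_const, nsmul_eq_mul]; ring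
  have hE : ∑ v, a v * (G.adjMatrix ℝ).mulVec b v
      = (∑ x ∈ A, eB x) - r * A.card * B.card / n := by
    calc ∑ v, a v * (G.adjMatrix ℝ).mulVec b v
        = ∑ v, (a v * eB v - (r * β) * a v) := by
          refine Finset.sum_congr rfl fun v _ => ?_
          rw [hMb v]; ring
      _ = ∑ v, a v * eB v - (r * β) * ∑ v, a v := by
          rw [Finset.sum_sub_distrib, Finset.mul_sum]
      _ = ∑ v, a v * eB v := by rw [ha, mul_zero, sub_zero]
      _ = ∑ v, ((if v ∈ A then (1 : ℝ) else 0) * eB v) - α * ∑ v, eB v := by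
          rw [haa, Finset.mul_sum, ← Finset.sum_sub_distrib]
          exact Finset.sum_congr rfl fun v _ => by ring
      _ = (∑ x ∈ A, eB x) - α * (r * B.card) := by
          rw [hsum_eB]
          congr 1
          simp only [ite_mul, one_mul, zero_mul]
          rw [Finset.sum_ite_mem, Finset.univ_inter]
      _ = (∑ x ∈ A, eB x) - r * A.card * B.card / n := by
          congr 1
          rw [hα]; field_simp
  have hnormsq : ∀ (S : Finset V) (γ : ℝ), n * γ = S.card →
      ∑ v, ((if v ∈ S then (1 : ℝ) else 0) - γ) ^ 2 = S.card * (1 - γ) := by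
    intro S γ hγ
    have hexp : ∀ v, ((if v ∈ S then (1 : ℝ) else 0) - γ) ^ 2
        = (if v ∈ S then (1 : ℝ) else 0) - 2 * γ * (if v ∈ S then (1 : ℝ) else 0) + γ ^ 2 := by
      intro v; by_cases h : v ∈ S <;> simp [h] <;> ring
    calc ∑ v, ((if v ∈ S then (1 : ℝ) else 0) - γ) ^ 2
        = ∑ v, ((if v ∈ S then (1 : ℝ) else 0) - 2 * γ * (if v ∈ S then (1 : ℝ) else 0) + γ ^ 2) :=
          Finset.sum_congr rfl fun v _ => hexp v
      _ = (S.card : ℝ) - 2 * γ * S.card + n * γ ^ 2 := by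
          rw [Finset.sum_add_distrib, Finset.sum_sub_distrib, hsum_ind, ← Finset.mul_sum,
            hsum_ind, Finset.sum_const, Finset.card_univ, nsmul_eq_mul, ← hnn]
      _ = S.card * (1 - γ) := by
          have h2 : n * γ ^ 2 = S.card * γ := by rw [sq, ← mul_assoc, hγ]
          rw [h2]; ring
  have hkey := spectral_bound' (G.adjMatrix ℝ) (Matrix.ext fun i j => by
      simp [Matrix.conjTranspose_apply, SimpleGraph.adjMatrix_apply, SimpleGraph.adj_comm])
    (r : ℝ) lam (fun g hg => eig_r_const' G r hconn hreg g hg) hmax a b ha hb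
  rw [hE, hnormsq A α hmulα, hnormsq B β hmulβ] at hkey
  refine le_trans hkey ?_
  apply mul_le_mul_of_nonneg_left _ (abs_nonneg lam)
  rw [← Real.sqrt_mul]
  · apply le_of_eq
    congr 1
    ring
  · have h1 : (A.card : ℝ) ≤ n := by
      rw [hnn]; exact_mod_cast Finset.card_le_univ A
    have : α ≤ 1 := by rw [hα]; exact div_le_one_of_le₀ h1 (le_of_lt hn0)
    have h0 : (0:ℝ) ≤ (A.card : ℝ) := Nat.cast_nonneg _
    nlinarith
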